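/- Let u : ℝ² → ℂ be twice continuously differentiable in the light-cone coordinates (x₊, x₋), and let λ ∈ ℂ with λ ≠ 0. Define the matrix-valued functions V₊⁰ = (1/(4λ))·[[1, −e^{2iu}, 0], [−e^{−2iu}, 1, 0], [0, 0, 2]] and V₋⁰ = [[i∂₋u − λ, λ, 0], [λ, −i∂₋u − λ, 0], [0, 0, −2λ]], where ∂± denote ∂/∂x±. Then at each point (x₊, x₋) ∈ ℝ², the zero-curvature condition ∂₊V₋⁰ − ∂₋V₊⁰ + V₋⁰V₊⁰ − V₊⁰V₋⁰ = 0 holds if and only if ∂₊∂₋u = −(1/2)·sin(2u) at that point. -/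

import Mathlib

open Matrix Complex

/-- Partial derivative with respect to the first light-cone coordinate `x₊`. -/
noncomputable def dplus (f : ℝ × ℝ → ℂ) (p : ℝ × ℝ) : ℂ :=
  deriv (fun x => f (x, p.2)) p.1

/-- Partial derivative with respect to the second light-cone coordinate `x₋`. -/
noncomputable def dminus (f : ℝ × ℝ → ℂ) (p : ℝ × ℝ) : ℂ :=
  deriv (fun y => f (p.1, y)) p.2

/-- Entrywise partial derivative `∂₊` of a matrix-valued function. -/
noncomputable def dplusM (V : ℝ × ℝ → Matrix (Fin 3) (Fin 3) ℂ) (p : ℝ × ℝ) :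
    Matrix (Fin 3) (Fin 3) ℂ :=
  Matrix.of fun i j => dplus (fun q => V q i j) p

/-- Entrywise partial derivative `∂₋` of a matrix-valued function. -/
noncomputable def dminusM (V : ℝ × ℝ → Matrix (Fin 3) (Fin 3) ℂ) (p : ℝ × ℝ) :
    Matrix (Fin 3) (Fin 3) ℂ :=
  Matrix.of fun i j => dminus (fun q => V q i j) p

/-- The bosonic body `V₊⁰` of the potential supermatrix `V₊`. -/
noncomputable def Vplus0 (lam : ℂ) (u : ℝ × ℝ → ℂ) (p : ℝ × ℝ) :
    Matrix (Fin 3) (Fin 3) ℂ :=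
  (1 / (4 * lam) : ℂ) •
    !![1, -exp (2 * I * u p), 0; -exp (-(2 * I * u p)), 1, 0; 0, 0, 2]

/-- The bosonic body `V₋⁰` of the potential supermatrix `V₋`. -/
noncomputable def Vminus0 (lam : ℂ) (u : ℝ × ℝ → ℂ) (p : ℝ × ℝ) :
    Matrix (Fin 3) (Fin 3) ℂ :=
  !![I * dminus u p - lam, lam, 0; lam, -(I * dminus u p) - lam, 0; 0, 0, -2 * lam]

section Aux

variable (u : ℝ × ℝ → ℂ) (hu : ContDiff ℝ 2 u)

lemma dminus_eq_fderiv (hu : ContDiff ℝ 2 u) (q : ℝ × ℝ) :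
    dminus u q = fderiv ℝ u q (0, 1) := by
  have h1 : HasFDerivAt u (fderiv ℝ u q) q :=
    (hu.differentiable (by norm_num) q).hasFDerivAt
  have h2 : HasDerivAt (fun y : ℝ => (q.1, y)) ((0 : ℝ), (1 : ℝ)) q.2 :=
    (hasDerivAt_const q.2 q.1).prodMk (hasDerivAt_id q.2)
  have h3 : HasDerivAt (fun y : ℝ => u (q.1, y)) (fderiv ℝ u q (0, 1)) q.2 := by
    simpa [Function.comp_def] using h1.comp_hasDerivAt q.2 h2
  exact h3.deriv

lemma contDiff_v (hu : ContDiff ℝ 2 u) : ContDiff ℝ 1 (fun q => fderiv ℝ u q (0, 1)) :=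
  (hu.fderiv_right (le_refl _)).clm_apply contDiff_const

lemma hasDerivAt_dminus_fst (hu : ContDiff ℝ 2 u) (p : ℝ × ℝ) :
    HasDerivAt (fun x => dminus u (x, p.2)) (dplus (fun q => dminus u q) p) p.1 := by
  have hv := contDiff_v u hu
  have hde : (fun x => dminus u (x, p.2)) = fun x => fderiv ℝ u (x, p.2) (0, 1) := by
    funext x; exact dminus_eq_fderiv u hu (x, p.2)
  have hdf : DifferentiableAt ℝ (fun x : ℝ => fderiv ℝ u (x, p.2) (0, 1)) p.1 := by
    exact ((hv.differentiable one_ne_zero).comp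
      (differentiable_id.prodMk (differentiable_const p.2))) p.1
  have : dplus (fun q => dminus u q) p = deriv (fun x => dminus u (x, p.2)) p.1 := rfl
  rw [this, hde]
  exact hdf.hasDerivAt

lemma hasDerivAt_u_snd (hu : ContDiff ℝ 2 u) (p : ℝ × ℝ) :
    HasDerivAt (fun y => u (p.1, y)) (dminus u p) p.2 := by
  have h1 : HasFDerivAt u (fderiv ℝ u p) p :=
    (hu.differentiable (by norm_num) p).hasFDerivAt
  have h2 : HasDerivAt (fun y : ℝ => (p.1, y)) ((0 : ℝ), (1 : ℝ)) p.2 :=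
    (hasDerivAt_const p.2 p.1).prodMk (hasDerivAt_id p.2)
  have h3 : HasDerivAt (fun y : ℝ => u (p.1, y)) (fderiv ℝ u p (0, 1)) p.2 := by
    simpa [Function.comp_def] using h1.comp_hasDerivAt p.2 h2
  rwa [dminus_eq_fderiv u hu p]

end Aux


set_option maxHeartbeats 2000000 in
/-- for a twice continuously differentiable `u` and `λ ≠ 0`, the
zero-curvature condition `∂₊V₋⁰ − ∂₋V₊⁰ + [V₋⁰, V₊⁰] = 0` holds at a point iff
`∂₊∂₋u = −(1/2)sin(2u)` holds at that point. -/
theorem bosonic_zero_curvature_iff_sineGordon (u : ℝ × ℝ → ℂ) (hu : ContDiff ℝ 2 u)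
    (lam : ℂ) (hlam : lam ≠ 0) (p : ℝ × ℝ) :
    (dplusM (Vminus0 lam u) p - dminusM (Vplus0 lam u) p +
        Vminus0 lam u p * Vplus0 lam u p - Vplus0 lam u p * Vminus0 lam u p = 0) ↔
      dplus (fun q => dminus u q) p = -(1 / 2) * sin (2 * u p) := by
  set w := dplus (fun q => dminus u q) p with hw
  set v := dminus u p with hv
  have hw1 := hasDerivAt_dminus_fst u hu p
  have hu2 := hasDerivAt_u_snd u hu p
  have key1 : dplusM (Vminus0 lam u) p =
      !![I * w, 0, 0; 0, -(I * w), 0; 0, 0, 0] := by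
    have e1 := ((hw1.const_mul I).sub_const lam).deriv
    have e2 := (((hw1.const_mul I).neg).sub_const lam).deriv
    ext i j
    fin_cases i <;> fin_cases j <;>
      simp [dplusM, dplus, Vminus0, Matrix.vecHead, Matrix.vecTail] <;>
      first
        | exact e1
        | exact e2
        | exact hw1.deriv
  have he1 : HasDerivAt (fun y => exp (2 * I * u (p.1, y)))
      (exp (2 * I * u p) * (2 * I * v)) p.2 := by
    simpa [mul_comm, mul_assoc, mul_left_comm] using (hu2.const_mul (2 * I)).cexp
  have he2 : HasDerivAt (fun y => exp (-(2 * I * u (p.1, y))))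
      (exp (-(2 * I * u p)) * -(2 * I * v)) p.2 := by
    simpa [mul_comm, mul_assoc, mul_left_comm] using ((hu2.const_mul (2 * I)).neg).cexp
  have key2 : dminusM (Vplus0 lam u) p =
      !![0, -(1 / (4 * lam) * (exp (2 * I * u p) * (2 * I * v))), 0;
         1 / (4 * lam) * (exp (-(2 * I * u p)) * (2 * I * v)), 0, 0; 0, 0, 0] := by
    have e1 := ((he1.neg).const_mul (1 / (4 * lam))).deriv
    have e2 := ((he2.neg).const_mul (1 / (4 * lam))).deriv
    ext i j
    fin_cases i <;> fin_cases j <;>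
      simp [dminusM, dminus, Vplus0, Matrix.vecHead, Matrix.vecTail] <;>
      first
        | exact Or.inl he1.deriv
        | (rw [he2.deriv]; ring)
  have hsin : sin (2 * u p) =
      (exp (-(2 * I * u p)) - exp (2 * I * u p)) * I / 2 := by
    simp only [Complex.sin]
    ring_nf
  rw [key1, key2]
  constructor
  · intro h
    have h00 := congrFun (congrFun h 0) 0
    simp only [Matrix.sub_apply, Matrix.add_apply, Matrix.mul_apply, Fin.sum_univ_three,
      Vplus0, Vminus0, Matrix.smul_apply, smul_eq_mul, Fin.isValue,
      Matrix.cons_val', Matrix.cons_val_zero, Matrix.cons_val_one, Matrix.head_cons,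
      Matrix.empty_val', Matrix.cons_val_fin_one, Matrix.head_fin_const,
      Matrix.zero_apply, Matrix.of_apply, Matrix.cons_val] at h00
    rw [hsin]
    field_simp at h00
    rw [mul_comm I 2] at h00
    have h2 : (4 * lam * I) * w =
        (4 * lam * I) * (-(1 / 2) * ((cexp (-(2 * I * u p)) - cexp (2 * I * u p)) * I / 2)) := by
      linear_combination h00 - lam * (cexp (2 * I * u p) - cexp (-(2 * I * u p))) * Complex.I_sq
    exact mul_left_cancel₀ (by simp [hlam, I_ne_zero] : (4 * lam * I : ℂ) ≠ 0) h2
  · intro h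
    rw [hsin] at h
    have hh : I * w = -(cexp (2 * I * u p) - cexp (-(2 * I * u p))) / 4 := by
      rw [h]
      linear_combination ((cexp (2 * I * u p) - cexp (-(2 * I * u p))) / 4) * Complex.I_sq
    ext i j
    fin_cases i <;> fin_cases j <;>
      simp [Matrix.mul_apply, Fin.sum_univ_three, Vplus0, Vminus0,
        Matrix.vecHead, Matrix.vecTail] <;>
      (try rw [hh]) <;> (try field_simp) <;> (try ring)
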